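/- Under the hypotheses of the Newton–Kantorovich radii polynomial theorem, if p(r_0) = Z_2(r_0)r_0² − (1 − Z_1 − Z_0)r_0 + Y_0 < 0 then necessarily Z_0 + Z_1 < 1, and the map T(x) := x − AF(x) is a contraction on the closed ball B_{r_0}(ā) with contraction constant Z_0 + Z_1 + Z_2(r_0)r_0 < 1. -/
import Mathlib


/-- Under the hypotheses of the Newton–Kantorovich radii polynomial theorem,
negativity of the radii polynomial at `r₀` forces `Z₀ + Z₁ < 1`, and the
Newton-like map `T x = x - A (F x)` is a contraction on the closed ball
`B_{r₀}(ā)` with contraction constant `Z₀ + Z₁ + Z₂(r₀) r₀ < 1`. -/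
theorem stmt_7 {X X' : Type*}
    [NormedAddCommGroup X] [NormedSpace ℝ X] [CompleteSpace X]
    [NormedAddCommGroup X'] [NormedSpace ℝ X']
    (F : X → X') (DF : X → X →L[ℝ] X')
    (hDF : ∀ c : X, HasFDerivAt F (DF c) c)
    (Adag : X →L[ℝ] X') (A : X' →L[ℝ] X)
    (hAinj : Function.Injective A)
    (abar : X) (Y₀ Z₀ Z₁ : ℝ) (Z₂ : ℝ → ℝ)
    (hY₀ : 0 ≤ Y₀) (hZ₀ : 0 ≤ Z₀) (hZ₁ : 0 ≤ Z₁)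
    (hZ₂pos : ∀ r : ℝ, 0 < r → 0 < Z₂ r)
    (hY : ‖A (F abar)‖ ≤ Y₀)
    (hZ0 : ‖ContinuousLinearMap.id ℝ X - A.comp Adag‖ ≤ Z₀)
    (hZ1 : ‖A.comp (DF abar - Adag)‖ ≤ Z₁)
    (hZ2 : ∀ r : ℝ, 0 < r → ∀ c ∈ Metric.closedBall abar r,
      ‖A.comp (DF c - DF abar)‖ ≤ Z₂ r * r)
    (r₀ : ℝ) (hr₀ : 0 < r₀)
    (hp : Z₂ r₀ * r₀ ^ 2 - (1 - Z₁ - Z₀) * r₀ + Y₀ < 0) :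
    Z₀ + Z₁ < 1 ∧
    Z₀ + Z₁ + Z₂ r₀ * r₀ < 1 ∧
    ∀ x ∈ Metric.closedBall abar r₀, ∀ y ∈ Metric.closedBall abar r₀,
      ‖(x - A (F x)) - (y - A (F y))‖ ≤ (Z₀ + Z₁ + Z₂ r₀ * r₀) * ‖x - y‖ := by

  have hZ₂r : 0 < Z₂ r₀ := hZ₂pos r₀ hr₀
  have hκ : Z₀ + Z₁ + Z₂ r₀ * r₀ < 1 := by
    have h1 : Z₂ r₀ * r₀ ^ 2 + Y₀ < (1 - Z₁ - Z₀) * r₀ := by linarith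
    have h2 : (Z₀ + Z₁ + Z₂ r₀ * r₀) * r₀ < 1 * r₀ := by nlinarith
    exact lt_of_mul_lt_mul_right h2 hr₀.le
  refine ⟨by nlinarith, hκ, ?_⟩
  intro x hx y hy
  set κ := Z₀ + Z₁ + Z₂ r₀ * r₀ with hκdef
  have hderiv : ∀ c ∈ Metric.closedBall abar r₀,
      HasFDerivWithinAt (fun z => z - A (F z))
        (ContinuousLinearMap.id ℝ X - A.comp (DF c)) (Metric.closedBall abar r₀) c := by
    intro c _
    exact (((hasFDerivAt_id c).sub (A.hasFDerivAt.comp c (hDF c)))).hasFDerivWithinAt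
  have hbound : ∀ c ∈ Metric.closedBall abar r₀,
      ‖ContinuousLinearMap.id ℝ X - A.comp (DF c)‖ ≤ κ := by
    intro c hc
    have hsplit : ContinuousLinearMap.id ℝ X - A.comp (DF c)
        = (ContinuousLinearMap.id ℝ X - A.comp Adag) - A.comp (DF abar - Adag)
          - A.comp (DF c - DF abar) := by
      ext v
      simp [ContinuousLinearMap.sub_apply, ContinuousLinearMap.comp_apply,
        ← map_add, ← map_sub]
    rw [hsplit]
    calc ‖(ContinuousLinearMap.id ℝ X - A.comp Adag) - A.comp (DF abar - Adag)
          - A.comp (DF c - DF abar)‖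
        ≤ ‖(ContinuousLinearMap.id ℝ X - A.comp Adag) - A.comp (DF abar - Adag)‖
          + ‖A.comp (DF c - DF abar)‖ := norm_sub_le _ _
      _ ≤ ‖ContinuousLinearMap.id ℝ X - A.comp Adag‖ + ‖A.comp (DF abar - Adag)‖
          + ‖A.comp (DF c - DF abar)‖ := by
            gcongr; exact norm_sub_le _ _
      _ ≤ Z₀ + Z₁ + Z₂ r₀ * r₀ := by
            gcongr
            exact hZ2 r₀ hr₀ c hc
  exact (convex_closedBall abar r₀).norm_image_sub_le_of_norm_hasFDerivWithin_le
    hderiv hbound hy hx
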